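/- arXiv:2002.10442 — 2 statements merged into one kernel-verified Lean document; each statement's English description precedes it below -/
import Mathlib

section
/- Let M = Σ_{i=0}^k ξ_i·D^i be a differential operator with coefficients ξ_i ∈ 𝓕. Then for all a, b ∈ 𝓕: [M(a), M(b)] = M( b_*(M(a)) − a_*(M(b)) ) + Σ_{i=0}^k ( D^i(b)·(ξ_i)_*(M(a)) − D^i(a)·(ξ_i)_*(M(b)) ). -/
open MvPolynomial

noncomputable section

/-- Variables of the ring 𝓕 = K[x, u₀, u₁, u₂, …]. -/
inductive FVar : Type
  | x : FVar
  | u : ℕ → FVar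
  deriving DecidableEq

/-- The ring 𝓕. -/
abbrev Fc (K : Type*) [CommSemiring K] : Type _ := MvPolynomial FVar K

variable {K : Type*} [Field K] [CharZero K]

/-- `D` is the total derivative with respect to x: the K-derivation with
D(x) = 1 and D(uᵢ) = u_{i+1}. -/
structure IsTotalDer (D : Derivation K (Fc K) (Fc K)) : Prop where
  hDx : D (X FVar.x) = 1
  hDu : ∀ i : ℕ, D (X (FVar.u i)) = X (FVar.u (i + 1))

/-- The Fréchet derivative a_* = Σ_{i≥0} (∂a/∂uᵢ)·D^i applied to `g`. -/
def frechet (D : Derivation K (Fc K) (Fc K)) (a g : Fc K) : Fc K :=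
  ∑ᶠ i : ℕ, pderiv (FVar.u i) a * (⇑D)^[i] g

/-- The Lie bracket [f, g] = g_*(f) − f_*(g). -/
def lieBracket (D : Derivation K (Fc K) (Fc K)) (f g : Fc K) : Fc K :=
  frechet D g f - frechet D f g

namespace Statement13Aux

variable (D : Derivation K (Fc K) (Fc K))

lemma fvar_u_injective : Function.Injective FVar.u := fun i j h => by injection h

lemma fsupp (a g : Fc K) :
    (Function.support fun i : ℕ => pderiv (FVar.u i) a * (⇑D)^[i] g).Finite := by
  apply Set.Finite.subset
    (Set.Finite.preimage (f := FVar.u)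
      (Set.injOn_of_injective fvar_u_injective) a.vars.finite_toSet)
  intro i hi
  simp only [Function.mem_support] at hi
  have hne : pderiv (FVar.u i) a ≠ 0 := fun h => hi (by rw [h, zero_mul])
  simp only [Set.mem_preimage, Finset.mem_coe]
  by_contra h
  exact hne (pderiv_eq_zero_of_notMem_vars h)

lemma Diter_add (i : ℕ) (p q : Fc K) :
    (⇑D)^[i] (p + q) = (⇑D)^[i] p + (⇑D)^[i] q := by
  induction i with
  | zero => rfl
  | succ n ih => simp [Function.iterate_succ_apply', ih, map_add]

lemma Diter_sub (i : ℕ) (p q : Fc K) :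
    (⇑D)^[i] (p - q) = (⇑D)^[i] p - (⇑D)^[i] q := by
  induction i with
  | zero => rfl
  | succ n ih => simp [Function.iterate_succ_apply', ih, map_sub]

lemma frechet_add (a b g : Fc K) :
    frechet D (a + b) g = frechet D a g + frechet D b g := by
  unfold frechet
  rw [← finsum_add_distrib (fsupp D a g) (fsupp D b g)]
  congr 1; funext i; rw [map_add, add_mul]

lemma frechet_zero (g : Fc K) : frechet D 0 g = 0 := by
  unfold frechet
  simp

lemma frechet_mul (a b g : Fc K) :
    frechet D (a * b) g = a * frechet D b g + b * frechet D a g := by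
  unfold frechet
  rw [mul_finsum _ _, mul_finsum _ _,
    ← finsum_add_distrib]
  · congr 1; funext i; rw [pderiv_mul]; ring
  · exact (fsupp D b g).subset fun i hi => by
      simp only [Function.mem_support] at hi ⊢
      exact fun h => hi (by rw [h, mul_zero])
  · exact (fsupp D a g).subset fun i hi => by
      simp only [Function.mem_support] at hi ⊢
      exact fun h => hi (by rw [h, mul_zero])

lemma frechet_C (c : K) (g : Fc K) : frechet D (C c) g = 0 := by
  unfold frechet
  simp

lemma frechet_X_x (g : Fc K) : frechet D (X FVar.x) g = 0 := by
  unfold frechet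
  have : ∀ i : ℕ, pderiv (FVar.u i) (X FVar.x : Fc K) = 0 := fun i =>
    pderiv_X_of_ne (by intro h; cases h)
  simp [this]

lemma frechet_X_u (j : ℕ) (g : Fc K) :
    frechet D (X (FVar.u j)) g = (⇑D)^[j] g := by
  unfold frechet
  rw [finsum_eq_single _ j]
  · rw [pderiv_X_self, one_mul]
  · intro i hij
    rw [pderiv_X_of_ne (fun h => hij (fvar_u_injective h).symm), zero_mul]

lemma frechet_D (hD : IsTotalDer D) (a g : Fc K) :
    frechet D (D a) g = D (frechet D a g) := by
  induction a using MvPolynomial.induction_on with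
  | C c =>
      rw [frechet_C, map_zero]
      have : D (C c : Fc K) = 0 := by
        rw [show (C c : Fc K) = algebraMap K (Fc K) c from rfl, Derivation.map_algebraMap]
      rw [this, frechet_zero]
  | add p q hp hq =>
      rw [map_add, frechet_add, frechet_add, hp, hq, map_add]
  | mul_X p v hp =>
      rw [Derivation.leibniz, smul_eq_mul, smul_eq_mul, frechet_add, frechet_mul,
        frechet_mul, frechet_mul]
      cases v with
      | x =>
          rw [hD.hDx, frechet_X_x, hp]
          have h1 : frechet D (1 : Fc K) g = 0 := by
            rw [show (1 : Fc K) = C 1 from (map_one C).symm, frechet_C]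
          rw [h1]
          simp only [mul_zero, zero_add, add_zero]
          rw [Derivation.leibniz, smul_eq_mul, smul_eq_mul, hD.hDx]
          ring
      | u n =>
          rw [hD.hDu, frechet_X_u, frechet_X_u, hp]
          rw [map_add, Derivation.leibniz, Derivation.leibniz,
            smul_eq_mul, smul_eq_mul, smul_eq_mul, smul_eq_mul, hD.hDu]
          rw [show D ((⇑D)^[n] g) = (⇑D)^[n + 1] g from
            (Function.iterate_succ_apply' (⇑D) n g).symm]
          ring

lemma frechet_Diter (hD : IsTotalDer D) (i : ℕ) (a g : Fc K) :
    frechet D ((⇑D)^[i] a) g = (⇑D)^[i] (frechet D a g) := by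
  induction i with
  | zero => rfl
  | succ n ih =>
      rw [Function.iterate_succ_apply', Function.iterate_succ_apply',
        frechet_D D hD, ih]

lemma frechet_sum {ι : Type*} (s : Finset ι) (f : ι → Fc K) (g : Fc K) :
    frechet D (∑ i ∈ s, f i) g = ∑ i ∈ s, frechet D (f i) g := by
  classical
  induction s using Finset.induction_on with
  | empty => simpa using frechet_zero D g
  | insert x s h ih =>
      rw [Finset.sum_insert h, Finset.sum_insert h, frechet_add, ih]

end Statement13Aux

open Statement13Aux in
/-- for any differential operator M = Σ_{i=0}^k ξ_i·D^i,
[M(a), M(b)] = M(b_*(M(a)) − a_*(M(b)))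
  + Σ_{i=0}^k ( D^i(b)·(ξ_i)_*(M(a)) − D^i(a)·(ξ_i)_*(M(b)) ). -/
theorem statement13
    (D : Derivation K (Fc K) (Fc K)) (hD : IsTotalDer D)
    (k : ℕ) (ξ : ℕ → Fc K)
    (M : Fc K → Fc K) (hM : ∀ a, M a = ∑ i ∈ Finset.range (k + 1), ξ i * (⇑D)^[i] a) :
    ∀ a b : Fc K,
      lieBracket D (M a) (M b) =
        M (frechet D b (M a) - frechet D a (M b))
          + ∑ i ∈ Finset.range (k + 1),
              ((⇑D)^[i] b * frechet D (ξ i) (M a) - (⇑D)^[i] a * frechet D (ξ i) (M b)) := by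
  intro a b
  have key : ∀ p q : Fc K, frechet D (M p) q =
      (∑ i ∈ Finset.range (k + 1), ξ i * (⇑D)^[i] (frechet D p q))
        + ∑ i ∈ Finset.range (k + 1), (⇑D)^[i] p * frechet D (ξ i) q := by
    intro p q
    rw [hM, frechet_sum, ← Finset.sum_add_distrib]
    exact Finset.sum_congr rfl fun i _ => by
      rw [frechet_mul, frechet_Diter D hD]
  rw [lieBracket, key, key, hM (frechet D b (M a) - frechet D a (M b))]
  simp only [Diter_sub, mul_sub, Finset.sum_sub_distrib]
  abel
end
end

section
/- Let M = D + u_1 (the operator a ↦ D(a) + u_1·a). Then for all a, b ∈ 𝓕: [M(a), M(b)] = M( b_*(M(a)) − a_*(M(b)) + D(a)·b − D(b)·a ). In particular M is pre-Hamiltonian: the Lie bracket of any two elements of the image of M again lies in the image of M. -/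
open MvPolynomial

noncomputable section

variable {K : Type*} [Field K] [CharZero K]

/-- Every polynomial has only finitely many nonzero partial derivatives w.r.t. the uᵢ. -/
lemma pderiv_bound (a : Fc K) : ∃ N : ℕ, ∀ i, N ≤ i → pderiv (FVar.u i) a = 0 := by
  induction a using MvPolynomial.induction_on with
  | C r => exact ⟨0, fun i _ => pderiv_C⟩
  | add p q hp hq =>
    obtain ⟨Np, hp⟩ := hp; obtain ⟨Nq, hq⟩ := hq
    refine ⟨max Np Nq, fun i hi => ?_⟩
    rw [map_add, hp i (le_trans (le_max_left _ _) hi),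
      hq i (le_trans (le_max_right _ _) hi), add_zero]
  | mul_X p n hp =>
    obtain ⟨Np, hp⟩ := hp
    cases n with
    | x =>
      refine ⟨Np, fun i hi => ?_⟩
      rw [pderiv_mul, hp i hi, pderiv_X_of_ne (by simp), mul_zero, zero_mul, add_zero]
    | u j =>
      refine ⟨max Np (j + 1), fun i hi => ?_⟩
      rw [pderiv_mul, hp i (le_trans (le_max_left _ _) hi),
        pderiv_X_of_ne (by simp; omega), mul_zero, zero_mul, add_zero]

lemma frechet_eq_sum (D : Derivation K (Fc K) (Fc K)) (a g : Fc K) {N : ℕ}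
    (hN : ∀ i, N ≤ i → pderiv (FVar.u i) a = 0) :
    frechet D a g = ∑ i ∈ Finset.range N, pderiv (FVar.u i) a * (⇑D)^[i] g := by
  refine finsum_eq_sum_of_support_subset _ ?_
  intro i hi
  simp only [Function.mem_support] at hi
  simp only [Finset.coe_range, Set.mem_Iio]
  by_contra h
  exact hi (by rw [hN i (le_of_not_gt h), zero_mul])

lemma D_pderiv_X (D : Derivation K (Fc K) (Fc K)) (v w : FVar) :
    D (pderiv v (X w) : Fc K) = 0 := by
  rcases eq_or_ne w v with rfl | h
  · rw [pderiv_X_self]; exact Derivation.map_one_eq_zero D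
  · rw [pderiv_X_of_ne h, map_zero]

lemma comm_succ (D : Derivation K (Fc K) (Fc K)) (hD : IsTotalDer D) (j : ℕ) :
    (⁅(pderiv (FVar.u (j + 1)) : Derivation K (Fc K) (Fc K)), D⁆) = pderiv (FVar.u j) := by
  apply derivation_ext
  intro v
  rw [Derivation.commutator_apply]
  cases v with
  | x =>
    rw [hD.hDx, pderiv_one, D_pderiv_X, sub_zero, pderiv_X_of_ne (by simp)]
  | u i =>
    rw [hD.hDu i, D_pderiv_X, sub_zero]
    by_cases h : j = i
    · subst h
      rw [pderiv_X_self, pderiv_X_self]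
    · rw [pderiv_X_of_ne (by simp only [ne_eq, FVar.u.injEq]; omega),
        pderiv_X_of_ne (by simp only [ne_eq, FVar.u.injEq]; omega)]

lemma comm_zero (D : Derivation K (Fc K) (Fc K)) (hD : IsTotalDer D) :
    (⁅(pderiv (FVar.u 0) : Derivation K (Fc K) (Fc K)), D⁆) = 0 := by
  apply derivation_ext
  intro v
  rw [Derivation.commutator_apply]
  cases v with
  | x =>
    rw [hD.hDx, pderiv_one, D_pderiv_X, sub_zero, Derivation.zero_apply]
  | u i =>
    rw [hD.hDu i, D_pderiv_X, sub_zero,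
      pderiv_X_of_ne (by simp only [ne_eq, FVar.u.injEq]; omega), Derivation.zero_apply]

lemma pderiv_D_succ (D : Derivation K (Fc K) (Fc K)) (hD : IsTotalDer D) (j : ℕ) (a : Fc K) :
    pderiv (FVar.u (j + 1)) (D a) =
      D (pderiv (FVar.u (j + 1)) a) + pderiv (FVar.u j) a := by
  have h := DFunLike.congr_fun (comm_succ D hD j) a
  rw [Derivation.commutator_apply] at h
  linear_combination h

lemma pderiv_D_zero (D : Derivation K (Fc K) (Fc K)) (hD : IsTotalDer D) (a : Fc K) :
    pderiv (FVar.u 0) (D a) = D (pderiv (FVar.u 0) a) := by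
  have h := DFunLike.congr_fun (comm_zero D hD) a
  rw [Derivation.commutator_apply, Derivation.zero_apply, sub_eq_zero] at h
  exact h

/-- The key commutation identity: (D a)_*(g) = D(a_*(g)). -/
lemma frechet_D (D : Derivation K (Fc K) (Fc K)) (hD : IsTotalDer D) (a g : Fc K) :
    frechet D (D a) g = D (frechet D a g) := by
  obtain ⟨N, hN⟩ := pderiv_bound a
  have hN' : ∀ i, N + 1 ≤ i → pderiv (FVar.u i) (D a) = 0 := by
    intro i hi
    obtain ⟨j, rfl⟩ : ∃ j, i = j + 1 := ⟨i - 1, by omega⟩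
    rw [pderiv_D_succ D hD, hN _ (by omega), hN _ (by omega), map_zero, add_zero]
  have expand : ∀ i, D (pderiv (FVar.u i) a * (⇑D)^[i] g) =
      D (pderiv (FVar.u i) a) * (⇑D)^[i] g + pderiv (FVar.u i) a * (⇑D)^[i + 1] g := by
    intro i
    rw [Derivation.leibniz, smul_eq_mul, smul_eq_mul, Function.iterate_succ_apply']
    ring
  have hL : frechet D (D a) g =
      (∑ k ∈ Finset.range N, D (pderiv (FVar.u (k + 1)) a) * (⇑D)^[k + 1] g)
        + (∑ k ∈ Finset.range N, pderiv (FVar.u k) a * (⇑D)^[k + 1] g)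
        + D (pderiv (FVar.u 0) a) * g := by
    rw [frechet_eq_sum D (D a) g hN', Finset.sum_range_succ', pderiv_D_zero D hD,
      Function.iterate_zero_apply, ← Finset.sum_add_distrib]
    congr 1
    apply Finset.sum_congr rfl
    intro k _
    rw [pderiv_D_succ D hD]
    ring
  have hR : D (frechet D a g) =
      (∑ k ∈ Finset.range N, D (pderiv (FVar.u (k + 1)) a) * (⇑D)^[k + 1] g)
        + (∑ k ∈ Finset.range N, pderiv (FVar.u k) a * (⇑D)^[k + 1] g)
        + D (pderiv (FVar.u 0) a) * g := by
    rw [frechet_eq_sum D a g (N := N + 1) (fun i hi => hN i (by omega)), map_sum,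
      Finset.sum_congr rfl (fun i _ => expand i), Finset.sum_add_distrib,
      Finset.sum_range_succ' (fun i => D (pderiv (FVar.u i) a) * (⇑D)^[i] g) N,
      Finset.sum_range_succ (fun i => pderiv (FVar.u i) a * (⇑D)^[i + 1] g) N,
      hN N le_rfl, zero_mul, add_zero, Function.iterate_zero_apply]
    ring
  rw [hL, hR]

lemma frechet_add_left (D : Derivation K (Fc K) (Fc K)) (a b g : Fc K) :
    frechet D (a + b) g = frechet D a g + frechet D b g := by
  obtain ⟨Na, ha⟩ := pderiv_bound a
  obtain ⟨Nb, hb⟩ := pderiv_bound (K := K) b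
  have hab : ∀ i, max Na Nb ≤ i → pderiv (FVar.u i) (a + b) = 0 := fun i hi => by
    rw [map_add, ha i (le_trans (le_max_left _ _) hi),
      hb i (le_trans (le_max_right _ _) hi), add_zero]
  rw [frechet_eq_sum D _ g hab,
    frechet_eq_sum D a g (fun i hi => ha i (le_trans (le_max_left _ _) hi)),
    frechet_eq_sum D b g (fun i hi => hb i (le_trans (le_max_right _ _) hi)),
    ← Finset.sum_add_distrib]
  exact Finset.sum_congr rfl fun i _ => by rw [map_add]; ring

lemma frechet_mul_left (D : Derivation K (Fc K) (Fc K)) (a b g : Fc K) :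
    frechet D (a * b) g = a * frechet D b g + b * frechet D a g := by
  obtain ⟨Na, ha⟩ := pderiv_bound a
  obtain ⟨Nb, hb⟩ := pderiv_bound (K := K) b
  have hab : ∀ i, max Na Nb ≤ i → pderiv (FVar.u i) (a * b) = 0 := fun i hi => by
    rw [pderiv_mul, ha i (le_trans (le_max_left _ _) hi),
      hb i (le_trans (le_max_right _ _) hi), mul_zero, zero_mul, add_zero]
  rw [frechet_eq_sum D _ g hab,
    frechet_eq_sum D a g (fun i hi => ha i (le_trans (le_max_left _ _) hi)),
    frechet_eq_sum D b g (fun i hi => hb i (le_trans (le_max_right _ _) hi)),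
    Finset.mul_sum, Finset.mul_sum, ← Finset.sum_add_distrib]
  exact Finset.sum_congr rfl fun i _ => by rw [pderiv_mul]; ring

lemma frechet_u1 (D : Derivation K (Fc K) (Fc K)) (g : Fc K) :
    frechet D (X (FVar.u 1)) g = D g := by
  have h : ∀ i, 2 ≤ i → pderiv (FVar.u i) (X (FVar.u 1) : Fc K) = 0 := fun i hi =>
    pderiv_X_of_ne (by simp; omega)
  rw [frechet_eq_sum D _ g h, Finset.sum_range_succ, Finset.sum_range_one,
    pderiv_X_of_ne (by simp), pderiv_X_self, zero_mul, zero_add, one_mul,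
    Function.iterate_one]

/-- for M = D + u₁,
[M(a), M(b)] = M(b_*(M(a)) − a_*(M(b)) + D(a)·b − D(b)·a) for all a, b;
in particular M is pre-Hamiltonian. -/
theorem statement15
    (D : Derivation K (Fc K) (Fc K)) (hD : IsTotalDer D)
    (M : Fc K → Fc K) (hM : ∀ a, M a = D a + X (FVar.u 1) * a) :
    (∀ a b : Fc K,
      lieBracket D (M a) (M b) =
        M (frechet D b (M a) - frechet D a (M b) + D a * b - D b * a)) ∧
    (∀ f g : Fc K, f ∈ Set.range M → g ∈ Set.range M →
      lieBracket D f g ∈ Set.range M) := by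
  have key : ∀ a b : Fc K,
      lieBracket D (M a) (M b) =
        M (frechet D b (M a) - frechet D a (M b) + D a * b - D b * a) := by
    intro a b
    have hfre : ∀ c f : Fc K, frechet D (M c) f = M (frechet D c f) + c * D f := by
      intro c f
      rw [hM c, frechet_add_left, frechet_D D hD, frechet_mul_left, frechet_u1, hM]
      ring
    rw [lieBracket, hfre b (M a), hfre a (M b)]
    simp only [hM, map_add, map_sub, Derivation.leibniz, smul_eq_mul]
    ring
  refine ⟨key, ?_⟩
  rintro f g ⟨a, rfl⟩ ⟨b, rfl⟩
  exact ⟨_, (key a b).symm⟩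

end
end
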